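/- Let γ₁, …, γ_N ∈ (0, π) and suppose there exist integers k₁, …, k_N with ∑ kᵢγᵢ ≡ 0 (mod 2π) and ∑ kᵢ odd. Set κ = ∑ |kᵢ|. Then for every integer ℓ, ∑_{i=1}^N cos(ℓγᵢ) ≥ −N + 1 + cos(π(1 − 1/κ)). -/

import Mathlib

open Real

/-- If `∑ kᵢ γᵢ ≡ 0 (mod 2π)` with `∑ kᵢ` odd and `κ = ∑ |kᵢ|`, then for every
integer `ℓ` we have `∑ cos(ℓ γᵢ) ≥ -N + 1 + cos(π (1 - 1/κ))`. -/
theorem sum_cos_lower_bound {N : ℕ} (hN : 0 < N) (γ : Fin N → ℝ)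
    (hγ : ∀ i, γ i ∈ Set.Ioo 0 π) (k : Fin N → ℤ) (M : ℤ)
    (hrel : ∑ i, (k i : ℝ) * γ i = 2 * π * M) (hodd : Odd (∑ i, k i))
    (κ : ℝ) (hκ : κ = ∑ i, |(k i : ℝ)|) (ℓ : ℤ) :
    -(N : ℝ) + 1 + Real.cos (π * (1 - 1 / κ)) ≤ ∑ i, Real.cos (ℓ * γ i) := by
  have hπ := Real.pi_pos
  have hsumne : (∑ i, k i) ≠ 0 := by
    intro h
    rw [h] at hodd
    exact (Int.not_odd_iff_even.mpr Even.zero) hodd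
  have hκ1 : (1 : ℝ) ≤ κ := by
    have h1 : (1 : ℝ) ≤ |((∑ i, k i : ℤ) : ℝ)| := by
      rw [← Int.cast_abs]
      exact_mod_cast Int.one_le_abs hsumne
    have h2 : |((∑ i, k i : ℤ) : ℝ)| ≤ ∑ i, |(k i : ℝ)| := by
      push_cast
      exact Finset.abs_sum_le_sum_abs _ _
    rw [hκ]; linarith
  have hκ0 : (0 : ℝ) < κ := by linarith
  -- key claim: some cosine is large
  have key : ∃ i, Real.cos (π * (1 - 1 / κ)) ≤ Real.cos (ℓ * γ i) := by
    by_contra hcon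
    push_neg at hcon
    set m : Fin N → ℤ := fun i => round ((ℓ * γ i - π) / (2 * π)) with hm
    set ε : Fin N → ℝ := fun i => ℓ * γ i - π - 2 * π * m i with hε
    have hεbound : ∀ i, |ε i| ≤ π := by
      intro i
      have h1 : |(ℓ * γ i - π) / (2 * π) - m i| ≤ 1 / 2 := abs_sub_round _
      have h2 : ε i = 2 * π * ((ℓ * γ i - π) / (2 * π) - m i) := by
        simp only [hε]
        field_simp [hε]
      rw [h2, abs_mul, abs_of_pos (by linarith : (0:ℝ) < 2 * π)]
      nlinarith
    have hcosε : ∀ i, Real.cos (ℓ * γ i) = -Real.cos (ε i) := by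
      intro i
      have : (ℓ : ℝ) * γ i = (π + ε i) + m i * (2 * π) := by rw [hε]; ring
      rw [this, Real.cos_add_int_mul_two_pi, Real.cos_add, Real.cos_pi, Real.sin_pi]
      ring
    have hπκ : π * (1 - 1 / κ) = π - π / κ := by ring
    have hcosrw : Real.cos (π * (1 - 1 / κ)) = -Real.cos (π / κ) := by
      rw [hπκ, Real.cos_pi_sub]
    have hπκpos : 0 < π / κ := div_pos hπ hκ0
    have hπκle : π / κ ≤ π := by
      rw [div_le_iff₀ hκ0]; nlinarith
    -- each |ε i| < π / κ
    have hεsmall : ∀ i, |ε i| < π / κ := by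
      intro i
      by_contra hge
      push_neg at hge
      have := Real.cos_le_cos_of_nonneg_of_le_pi (le_of_lt hπκpos) (hεbound i) hge
      have h3 := hcon i
      rw [hcosrw, hcosε i] at h3
      have h4 : Real.cos (π / κ) < Real.cos (ε i) := by linarith
      rw [← Real.cos_abs (ε i)] at h4
      linarith
    -- weighted sum of ε is an odd multiple of π
    set J : ℤ := 2 * ℓ * M - (∑ i, k i) - 2 * ∑ i, k i * m i with hJ
    have hsumε : ∑ i, (k i : ℝ) * ε i = π * J := by
      have h0 : ∑ i, (k i : ℝ) * ε i
          = ∑ i, ((ℓ : ℝ) * ((k i : ℝ) * γ i) - π * (k i : ℝ)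
            - 2 * π * ((k i : ℝ) * (m i : ℝ))) :=
        Finset.sum_congr rfl fun i _ => by rw [hε]; ring
      rw [h0, Finset.sum_sub_distrib, Finset.sum_sub_distrib, ← Finset.mul_sum,
        ← Finset.mul_sum, ← Finset.mul_sum, hrel, hJ]
      push_cast
      ring
    have hJodd : Odd J := by
      rcases hodd with ⟨t, ht⟩
      exact ⟨ℓ * M - (2 * t + 1) - ∑ i, k i * m i + t, by rw [hJ, ht]; ring⟩
    have hJne : J ≠ 0 := by
      intro h0
      rw [h0] at hJodd
      simp [Int.odd_iff] at hJodd
    have hJ1 : (1 : ℝ) ≤ |(J : ℝ)| := by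
      rw [← Int.cast_abs]
      exact_mod_cast Int.one_le_abs hJne
    have hlb : π ≤ |∑ i, (k i : ℝ) * ε i| := by
      rw [hsumε, abs_mul, abs_of_pos hπ]
      nlinarith
    -- but the weighted sum is strictly less than π in absolute value
    obtain ⟨i₀, hi₀⟩ : ∃ i, k i ≠ 0 := by
      by_contra hall
      push_neg at hall
      exact hsumne (Finset.sum_eq_zero fun i _ => hall i)
    have hub : |∑ i, (k i : ℝ) * ε i| < π := by
      have h1 : |∑ i, (k i : ℝ) * ε i| ≤ ∑ i, |(k i : ℝ)| * |ε i| := by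
        refine (Finset.abs_sum_le_sum_abs _ _).trans ?_
        apply le_of_eq
        exact Finset.sum_congr rfl fun i _ => abs_mul _ _
      have h2 : ∑ i, |(k i : ℝ)| * |ε i| < ∑ i, |(k i : ℝ)| * (π / κ) := by
        apply Finset.sum_lt_sum
        · intro i _
          exact mul_le_mul_of_nonneg_left (le_of_lt (hεsmall i)) (abs_nonneg _)
        · refine ⟨i₀, Finset.mem_univ _, ?_⟩
          have : (0 : ℝ) < |(k i₀ : ℝ)| := by
            simp only [abs_pos]
            exact_mod_cast hi₀
          exact mul_lt_mul_of_pos_left (hεsmall i₀) this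
      have h3 : ∑ i, |(k i : ℝ)| * (π / κ) = π := by
        rw [← Finset.sum_mul, ← hκ]
        field_simp
      linarith
    linarith
  obtain ⟨i, hi⟩ := key
  have hsplit : ∑ j, Real.cos (ℓ * γ j)
      = Real.cos (ℓ * γ i) + ∑ j ∈ Finset.univ.erase i, Real.cos (ℓ * γ j) :=
    (Finset.add_sum_erase _ _ (Finset.mem_univ i)).symm
  have hcard : (Finset.univ.erase i).card = N - 1 := by
    rw [Finset.card_erase_of_mem (Finset.mem_univ i), Finset.card_univ, Fintype.card_fin]
  have hrest : -(N : ℝ) + 1 ≤ ∑ j ∈ Finset.univ.erase i, Real.cos (ℓ * γ j) := by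
    have h := Finset.card_nsmul_le_sum (Finset.univ.erase i)
      (fun j => Real.cos (ℓ * γ j)) (-1 : ℝ) (fun j _ => Real.neg_one_le_cos _)
    rw [hcard, nsmul_eq_mul] at h
    have : ((N - 1 : ℕ) : ℝ) = (N : ℝ) - 1 := by
      have : (1 : ℕ) ≤ N := hN
      push_cast [Nat.cast_sub this]
      ring
    rw [this] at h
    linarith
  rw [hsplit]
  linarith
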